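/- Fix integers n ≥ 0 and m ≥ 0, and define for y ∈ ℝ the quantizer Q_i(y) = 2^{−n} · round(2^n y) (nearest point of the lattice Λ_i = 2^{−n}ℤ, with a fixed tie-breaking rule) and the reduction y mod Λ_o = y − 2^m · round(2^{−m} y) (nearest-point reduction modulo the lattice Λ_o = 2^m ℤ). For σ² > 1/2 let (x_1, x_2) be zero-mean jointly Gaussian with E[x_1²] = E[x_2²] = σ² and E[x_1 x_2] = (1 − 1/(2σ²))σ², so that x_1 − x_2 is a standard Gaussian. Set x̃_j = Q_i(x_j), u_j = x̃_j mod Λ_o for j = 1, 2, and x̂_3 = (u_1 − u_2) mod Λ_o. Then for every d > 0 there exist m and n (not depending on σ²) such that E[(x_1 − x_2 − x̂_3)²] ≤ d for all σ² > 1/2. -/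

import Mathlib

open MeasureTheory ProbabilityTheory
open Real Filter Set Asymptotics
open scoped NNReal ENNReal

/-- A finite family of real random variables is *jointly Gaussian* if every linear
combination of them has a (possibly degenerate) Gaussian distribution. -/
def IsJointlyGaussian {Ω ι : Type*} [MeasurableSpace Ω] [Fintype ι]
    (μ : Measure Ω) (X : ι → Ω → ℝ) : Prop :=
  ∀ c : ι → ℝ, ∃ (m : ℝ) (v : NNReal),
    Measure.map (fun ω => ∑ i, c i * X i ω) μ = gaussianReal m v

/-- The quantizer onto the fine lattice `Λ_i = 2^(−n) ℤ`:
`Q_i(y) = 2^(−n) ⬝ round(2^n y)` (nearest point, rounding half up). -/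
noncomputable def Qi (n : ℕ) (y : ℝ) : ℝ :=
  (2 : ℝ) ^ (-(n : ℤ)) * (round ((2 : ℝ) ^ (n : ℕ) * y) : ℤ)

/-- Reduction modulo the coarse lattice `Λ_o = 2^m ℤ`:
`y mod Λ_o = y − 2^m ⬝ round(2^(−m) y)`. -/
noncomputable def modLat (m : ℕ) (y : ℝ) : ℝ :=
  y - (2 : ℝ) ^ (m : ℕ) * (round ((2 : ℝ) ^ (-(m : ℤ)) * y) : ℤ)


noncomputable def gpdf (x : ℝ) : ℝ := (Real.sqrt (2 * Real.pi))⁻¹ * Real.exp (-x ^ 2 / 2)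

lemma gpdf_nonneg (x : ℝ) : 0 ≤ gpdf x := by unfold gpdf; positivity

lemma gpdf_meas : Measurable gpdf := by unfold gpdf; fun_prop

lemma gaussianReal01_eq :
    gaussianReal 0 1 = volume.withDensity (fun x => ENNReal.ofReal (gpdf x)) := by
  rw [gaussianReal_of_var_ne_zero 0 one_ne_zero]
  congr 1
  funext x
  unfold gaussianPDF
  congr 1
  simp [gaussianPDFReal, gpdf, neg_div]

lemma integral_gauss01 (g : ℝ → ℝ) :
    ∫ x, g x ∂(gaussianReal 0 1) = ∫ x, gpdf x * g x := by
  rw [gaussianReal01_eq]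
  have hd : (fun x => ENNReal.ofReal (gpdf x)) =
      fun x => ((Real.toNNReal (gpdf x) : ℝ≥0) : ℝ≥0∞) := rfl
  rw [hd, integral_withDensity_eq_integral_smul (gpdf_meas.real_toNNReal) g]
  congr 1
  funext x
  rw [NNReal.smul_def, Real.coe_toNNReal _ (gpdf_nonneg x)]
  rfl

lemma integrable_gauss01 {g : ℝ → ℝ} (h : Integrable (fun x => gpdf x * g x) volume) :
    Integrable g (gaussianReal 0 1) := by
  rw [gaussianReal01_eq]
  have hd : (fun x => ENNReal.ofReal (gpdf x)) =
      fun x => ((Real.toNNReal (gpdf x) : ℝ≥0) : ℝ≥0∞) := rfl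
  rw [hd, integrable_withDensity_iff_integrable_smul (gpdf_meas.real_toNNReal)]
  refine h.congr (Filter.Eventually.of_forall fun x => ?_)
  simp only []
  rw [NNReal.smul_def, Real.coe_toNNReal _ (gpdf_nonneg x), smul_eq_mul]

lemma integrable_poly_gauss (k : ℕ) :
    Integrable (fun x : ℝ => x ^ k * Real.exp (-x ^ 2 / 2)) := by
  have h := integrable_rpow_mul_exp_neg_mul_sq (b := 1/2) (by norm_num)
      (s := (k : ℝ)) (by exact_mod_cast neg_one_lt_zero.trans_le (Nat.cast_nonneg k))
  refine h.congr (Filter.Eventually.of_forall fun x => ?_)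
  simp only []
  rw [Real.rpow_natCast]
  ring_nf

lemma tendsto_exp_gauss_atTop : Filter.Tendsto (fun x : ℝ => Real.exp (-x ^ 2 / 2)) atTop (nhds 0) := by
  have h1 : Filter.Tendsto (fun x : ℝ => -x ^ 2 / 2) atTop atBot := by
    apply Filter.Tendsto.atBot_div_const (by norm_num : (0:ℝ) < 2)
    exact tendsto_neg_atBot_iff.mpr (tendsto_pow_atTop (by norm_num))
  exact Real.tendsto_exp_atBot.comp h1

lemma tendsto_exp_gauss_atBot : Filter.Tendsto (fun x : ℝ => Real.exp (-x ^ 2 / 2)) atBot (nhds 0) := by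
  have := tendsto_exp_gauss_atTop.comp tendsto_neg_atBot_atTop
  refine this.congr fun x => ?_
  simp [Function.comp]

lemma tendsto_x_exp_gauss_atTop :
    Filter.Tendsto (fun x : ℝ => x * Real.exp (-x ^ 2 / 2)) atTop (nhds 0) := by
  have hlo := rpow_mul_exp_neg_mul_sq_isLittleO_exp_neg (b := 1/2) (by norm_num) 1
  have h2 : Filter.Tendsto (fun x : ℝ => Real.exp (-(1/2) * x)) atTop (nhds 0) := by
    apply Real.tendsto_exp_atBot.comp
    have h3 : Filter.Tendsto (fun x : ℝ => (1/2 : ℝ) * x) atTop atTop :=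
      Filter.Tendsto.const_mul_atTop (by norm_num) tendsto_id
    exact (tendsto_neg_atBot_iff.mpr h3).congr fun x => by ring
  have h3 := hlo.isBigO.trans_tendsto h2
  refine h3.congr' (Filter.Eventually.of_forall fun x => ?_)
  rw [Real.rpow_one]
  ring_nf

lemma tendsto_x_exp_gauss_atBot :
    Filter.Tendsto (fun x : ℝ => x * Real.exp (-x ^ 2 / 2)) atBot (nhds 0) := by
  have h := (tendsto_x_exp_gauss_atTop.comp tendsto_neg_atBot_atTop).neg
  rw [neg_zero] at h
  refine h.congr fun x => ?_
  simp [Function.comp]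

lemma integral_exp_gauss : ∫ x : ℝ, Real.exp (-x ^ 2 / 2) = Real.sqrt (2 * Real.pi) := by
  have h := integral_gaussian (1/2)
  rw [show Real.pi / (1/2) = 2 * Real.pi by ring] at h
  rw [← h]
  congr 1
  funext x
  ring_nf

lemma integral_x_exp_gauss : ∫ x : ℝ, x * Real.exp (-x ^ 2 / 2) = 0 := by
  have hder : ∀ x : ℝ, HasDerivAt (fun y : ℝ => -Real.exp (-y ^ 2 / 2))
      (x * Real.exp (-x ^ 2 / 2)) x := by
    intro x
    have h1 : HasDerivAt (fun y : ℝ => -y ^ 2 / 2) (-x) x := by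
      have h := ((hasDerivAt_pow 2 x).neg.div_const 2)
      refine h.congr_deriv ?_
      norm_num
      ring
    have h3 := h1.exp.neg
    refine h3.congr_deriv ?_
    ring
  have hint : Integrable (fun x : ℝ => x * Real.exp (-x ^ 2 / 2)) := by
    have := integrable_poly_gauss 1
    simpa using this
  have hbot := tendsto_exp_gauss_atBot.neg
  have htop := tendsto_exp_gauss_atTop.neg
  rw [neg_zero] at hbot htop
  have := MeasureTheory.integral_of_hasDerivAt_of_tendsto hder hint hbot htop
  simpa using this

lemma integral_sq_exp_gauss :
    ∫ x : ℝ, x ^ 2 * Real.exp (-x ^ 2 / 2) = Real.sqrt (2 * Real.pi) := by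
  have hder : ∀ x : ℝ, HasDerivAt (fun y : ℝ => -(y * Real.exp (-y ^ 2 / 2)))
      (x ^ 2 * Real.exp (-x ^ 2 / 2) - Real.exp (-x ^ 2 / 2)) x := by
    intro x
    have h1 : HasDerivAt (fun y : ℝ => -y ^ 2 / 2) (-x) x := by
      have h := ((hasDerivAt_pow 2 x).neg.div_const 2)
      refine h.congr_deriv ?_
      norm_num
      ring
    have h2 := ((hasDerivAt_id x).mul h1.exp).neg
    refine h2.congr_deriv ?_
    simp only [id_eq]
    ring
  have hint : Integrable
      (fun x : ℝ => x ^ 2 * Real.exp (-x ^ 2 / 2) - Real.exp (-x ^ 2 / 2)) := by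
    have h0 := integrable_poly_gauss 0
    simp only [pow_zero, one_mul] at h0
    exact (integrable_poly_gauss 2).sub h0
  have hbot := tendsto_x_exp_gauss_atBot.neg
  have htop := tendsto_x_exp_gauss_atTop.neg
  rw [neg_zero] at hbot htop
  have h := MeasureTheory.integral_of_hasDerivAt_of_tendsto hder hint hbot htop
  have h0 := integrable_poly_gauss 0
  simp only [pow_zero, one_mul] at h0
  rw [integral_sub (integrable_poly_gauss 2) h0, integral_exp_gauss, sub_self] at h
  linarith [integral_exp_gauss]

lemma integrable_poly01 (k : ℕ) : Integrable (fun x : ℝ => x ^ k) (gaussianReal 0 1) := by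
  apply integrable_gauss01
  have h := (integrable_poly_gauss k).const_mul (Real.sqrt (2 * Real.pi))⁻¹
  refine h.congr (Filter.Eventually.of_forall fun x => ?_)
  unfold gpdf
  ring

lemma integral_id01 : ∫ x, x ∂(gaussianReal 0 1) = 0 := by
  rw [integral_gauss01]
  have : (fun x : ℝ => gpdf x * x) =
      fun x => (Real.sqrt (2 * Real.pi))⁻¹ * (x * Real.exp (-x ^ 2 / 2)) := by
    funext x; unfold gpdf; ring
  rw [this, integral_const_mul, integral_x_exp_gauss, mul_zero]

lemma integral_sq01 : ∫ x, x ^ 2 ∂(gaussianReal 0 1) = 1 := by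
  rw [integral_gauss01]
  have : (fun x : ℝ => gpdf x * x ^ 2) =
      fun x => (Real.sqrt (2 * Real.pi))⁻¹ * (x ^ 2 * Real.exp (-x ^ 2 / 2)) := by
    funext x; unfold gpdf; ring
  rw [this, integral_const_mul, integral_sq_exp_gauss]
  rw [inv_mul_cancel₀]
  positivity

lemma map_std (m0 : ℝ) (v : ℝ≥0) :
    Measure.map (fun x => Real.sqrt v * x + m0) (gaussianReal 0 1) = gaussianReal m0 v := by
  have h1 := gaussianReal_map_const_mul (μ := 0) (v := 1) (Real.sqrt v)
  have h2 : (⟨(Real.sqrt v) ^ 2, sq_nonneg _⟩ : ℝ≥0) * 1 = v := by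
    ext
    simp [Real.sq_sqrt v.coe_nonneg]
  rw [mul_zero] at h1; replace h1 := h1.trans (congrArg (gaussianReal 0) h2)
  have h3 := gaussianReal_map_add_const (μ := 0) (v := v) m0
  rw [zero_add] at h3
  rw [← h3, ← h1, Measure.map_map (measurable_add_const m0) (measurable_const_mul _)]
  rfl

lemma meas_aff (m0 : ℝ) (v : ℝ≥0) : Measurable (fun x : ℝ => Real.sqrt v * x + m0) :=
  (measurable_const_mul _).add_const m0

lemma integrable_id_gauss (m0 : ℝ) (v : ℝ≥0) :
    Integrable (fun x => x) (gaussianReal m0 v) := by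
  rw [← map_std m0 v]
  rw [integrable_map_measure measurable_id'.aestronglyMeasurable ((meas_aff m0 v).aemeasurable)]
  have h1 := integrable_poly01 1
  simp only [pow_one] at h1
  exact (h1.const_mul (Real.sqrt v)).add (integrable_const m0)

lemma integrable_sq_gauss (m0 : ℝ) (v : ℝ≥0) :
    Integrable (fun x => x ^ 2) (gaussianReal m0 v) := by
  rw [← map_std m0 v]
  rw [integrable_map_measure (by fun_prop) ((meas_aff m0 v).aemeasurable)]
  have h1 := integrable_poly01 1
  simp only [pow_one] at h1
  have hA : Integrable
      (fun x : ℝ => (Real.sqrt v) ^ 2 * x ^ 2 + (2 * Real.sqrt v * m0) * x)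
      (gaussianReal 0 1) :=
    ((integrable_poly01 2).const_mul ((Real.sqrt v) ^ 2)).add
      (h1.const_mul (2 * Real.sqrt v * m0))
  have h := hA.add (integrable_const (m0 ^ 2))
  refine h.congr (Filter.Eventually.of_forall fun x => ?_)
  simp only [Function.comp, Pi.add_apply]
  ring

lemma integral_id_gauss (m0 : ℝ) (v : ℝ≥0) :
    ∫ x, x ∂(gaussianReal m0 v) = m0 := by
  rw [← map_std m0 v,
    integral_map ((meas_aff m0 v).aemeasurable) measurable_id'.aestronglyMeasurable]
  have h1 := integrable_poly01 1
  simp only [pow_one] at h1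
  have hA : Integrable (fun x : ℝ => Real.sqrt v * x) (gaussianReal 0 1) :=
    h1.const_mul (Real.sqrt v)
  rw [integral_add hA (integrable_const m0), integral_const_mul, integral_id01, integral_const]
  simp

lemma integral_sq_gauss (m0 : ℝ) (v : ℝ≥0) :
    ∫ x, x ^ 2 ∂(gaussianReal m0 v) = m0 ^ 2 + v := by
  rw [← map_std m0 v, integral_map ((meas_aff m0 v).aemeasurable) (by fun_prop)]
  have h1 := integrable_poly01 1
  simp only [pow_one] at h1
  have he : (fun x => (Real.sqrt v * x + m0) ^ 2) =
      fun x : ℝ => ((Real.sqrt v) ^ 2 * x ^ 2 + (2 * Real.sqrt v * m0) * x) + m0 ^ 2 := by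
    funext x; ring
  have hA : Integrable
      (fun x : ℝ => (Real.sqrt v) ^ 2 * x ^ 2 + (2 * Real.sqrt v * m0) * x)
      (gaussianReal 0 1) :=
    ((integrable_poly01 2).const_mul _).add (h1.const_mul _)
  have hB : Integrable (fun x : ℝ => (Real.sqrt v) ^ 2 * x ^ 2) (gaussianReal 0 1) :=
    (integrable_poly01 2).const_mul _
  have hC : Integrable (fun x : ℝ => (2 * Real.sqrt v * m0) * x) (gaussianReal 0 1) :=
    h1.const_mul _
  rw [he, integral_add hA (integrable_const _), integral_add hB hC,
    integral_const_mul, integral_const_mul, integral_id01, integral_sq01, integral_const]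
  simp [Real.sq_sqrt v.coe_nonneg]
  ring

lemma two_zpow_mul_pow (n : ℕ) : (2 : ℝ) ^ (-(n : ℤ)) * (2 : ℝ) ^ (n : ℕ) = 1 := by
  rw [← zpow_natCast (2 : ℝ) n, ← zpow_add₀ (by norm_num : (2:ℝ) ≠ 0)]
  simp

lemma abs_sub_Qi (n : ℕ) (y : ℝ) : |y - Qi n y| ≤ (2 : ℝ) ^ (-(n : ℤ)) / 2 := by
  unfold Qi
  have hkey : y - (2 : ℝ) ^ (-(n : ℤ)) * (round ((2 : ℝ) ^ (n : ℕ) * y) : ℤ)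
      = (2 : ℝ) ^ (-(n : ℤ)) * ((2 : ℝ) ^ (n : ℕ) * y - (round ((2 : ℝ) ^ (n : ℕ) * y) : ℤ)) := by
    rw [mul_sub, ← mul_assoc, two_zpow_mul_pow, one_mul]
  rw [hkey, abs_mul, abs_of_pos (by positivity : (0:ℝ) < (2 : ℝ) ^ (-(n : ℤ)))]
  have h := abs_sub_round ((2 : ℝ) ^ (n : ℕ) * y)
  calc (2 : ℝ) ^ (-(n : ℤ)) * |(2 : ℝ) ^ (n : ℕ) * y - (round ((2 : ℝ) ^ (n : ℕ) * y) : ℤ)|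
      ≤ (2 : ℝ) ^ (-(n : ℤ)) * (1/2) := by
        exact mul_le_mul_of_nonneg_left h (by positivity)
    _ = (2 : ℝ) ^ (-(n : ℤ)) / 2 := by ring

lemma abs_modLat_le (m : ℕ) (y : ℝ) : |modLat m y| ≤ (2 : ℝ) ^ (m : ℕ) / 2 := by
  unfold modLat
  have hkey : y - (2 : ℝ) ^ (m : ℕ) * (round ((2 : ℝ) ^ (-(m : ℤ)) * y) : ℤ)
      = (2 : ℝ) ^ (m : ℕ) * ((2 : ℝ) ^ (-(m : ℤ)) * y - (round ((2 : ℝ) ^ (-(m : ℤ)) * y) : ℤ)) := by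
    rw [mul_sub, ← mul_assoc]
    rw [mul_comm ((2:ℝ) ^ (m : ℕ)) ((2:ℝ) ^ (-(m : ℤ))), two_zpow_mul_pow, one_mul]
  rw [hkey, abs_mul, abs_of_pos (by positivity : (0:ℝ) < (2 : ℝ) ^ (m : ℕ))]
  have h := abs_sub_round ((2 : ℝ) ^ (-(m : ℤ)) * y)
  calc (2 : ℝ) ^ (m : ℕ) * |(2 : ℝ) ^ (-(m : ℤ)) * y - (round ((2 : ℝ) ^ (-(m : ℤ)) * y) : ℤ)|
      ≤ (2 : ℝ) ^ (m : ℕ) * (1/2) := mul_le_mul_of_nonneg_left h (by positivity)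
    _ = (2 : ℝ) ^ (m : ℕ) / 2 := by ring

lemma modLat_eq_self (m : ℕ) {y : ℝ} (h : |y| < (2 : ℝ) ^ (m : ℕ) / 2) : modLat m y = y := by
  unfold modLat
  have habs : |(2 : ℝ) ^ (-(m : ℤ)) * y| < 1/2 := by
    rw [abs_mul, abs_of_pos (by positivity : (0:ℝ) < (2 : ℝ) ^ (-(m : ℤ)))]
    have h2 : (2 : ℝ) ^ (-(m : ℤ)) * |y| < (2 : ℝ) ^ (-(m : ℤ)) * ((2 : ℝ) ^ (m : ℕ) / 2) :=
      mul_lt_mul_of_pos_left h (by positivity)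
    calc (2 : ℝ) ^ (-(m : ℤ)) * |y| < (2 : ℝ) ^ (-(m : ℤ)) * ((2 : ℝ) ^ (m : ℕ) / 2) := h2
      _ = 1/2 := by rw [show (2 : ℝ) ^ (-(m : ℤ)) * ((2 : ℝ) ^ (m : ℕ) / 2)
            = ((2 : ℝ) ^ (-(m : ℤ)) * (2 : ℝ) ^ (m : ℕ)) / 2 by ring, two_zpow_mul_pow]
  have hr : round ((2 : ℝ) ^ (-(m : ℤ)) * y) = 0 := by
    rw [round_eq_zero_iff]
    constructor
    · linarith [abs_lt.mp habs |>.1]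
    · linarith [abs_lt.mp habs |>.2]
  rw [hr]
  simp

lemma modLat_sub_int (m : ℕ) (y : ℝ) (k : ℤ) :
    modLat m (y - (2 : ℝ) ^ (m : ℕ) * (k : ℝ)) = modLat m y := by
  unfold modLat
  have harg : (2 : ℝ) ^ (-(m : ℤ)) * (y - (2 : ℝ) ^ (m : ℕ) * (k : ℝ))
      = (2 : ℝ) ^ (-(m : ℤ)) * y - (k : ℝ) := by
    rw [mul_sub, ← mul_assoc]
    rw [two_zpow_mul_pow, one_mul]
  rw [harg, round_sub_intCast]
  push_cast
  ring

lemma indicator_nonneg_aux (T z : ℝ) :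
    0 ≤ Set.indicator {z : ℝ | T ≤ |z|} (fun z => 8 * z ^ 2 + 8) z :=
  Set.indicator_nonneg (fun z _ => by positivity) z

lemma pointwise_bound (n M : ℕ) (y₁ y₂ : ℝ) :
    (y₁ - y₂ - modLat (M + 1) (modLat (M + 1) (Qi n y₁) - modLat (M + 1) (Qi n y₂))) ^ 2
      ≤ (2 : ℝ) ^ (-(n : ℤ)) +
        Set.indicator {z : ℝ | (2 : ℝ) ^ M - 1 ≤ |z|} (fun z => 8 * z ^ 2 + 8) (y₁ - y₂) := by
  set ε : ℝ := (2 : ℝ) ^ (-(n : ℤ)) with hεdef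
  have hε : 0 < ε := by positivity
  have hε1 : ε ≤ 1 := by
    rw [hεdef]
    calc (2 : ℝ) ^ (-(n : ℤ)) ≤ (2 : ℝ) ^ (0 : ℤ) :=
      zpow_le_zpow_right₀ one_le_two (by omega)
    _ = 1 := by norm_num
  set q₁ := Qi n y₁
  set q₂ := Qi n y₂
  set Z := y₁ - y₂ with hZdef
  set w := q₁ - q₂ with hwdef
  have hhalf : (2 : ℝ) ^ (M + 1 : ℕ) / 2 = (2 : ℝ) ^ (M : ℕ) := by
    rw [pow_succ]; ring
  -- the inner reduction equals modLat of w
  have hinner : modLat (M + 1) (modLat (M + 1) q₁ - modLat (M + 1) q₂) = modLat (M + 1) w := by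
    have h1 : modLat (M + 1) q₁ - modLat (M + 1) q₂
        = w - (2 : ℝ) ^ (M + 1 : ℕ) *
          ((round ((2 : ℝ) ^ (-(M + 1 : ℕ) : ℤ) * q₁) - round ((2 : ℝ) ^ (-(M + 1 : ℕ) : ℤ) * q₂) : ℤ) : ℝ) := by
      unfold modLat
      push_cast
      ring
    rw [h1, modLat_sub_int]
  rw [hinner]
  have hZw : |Z - w| ≤ ε := by
    have h1 := abs_sub_Qi n y₁
    have h2 := abs_sub_Qi n y₂
    have : Z - w = (y₁ - q₁) - (y₂ - q₂) := by rw [hZdef, hwdef]; ring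
    rw [this]
    calc |(y₁ - q₁) - (y₂ - q₂)| ≤ |y₁ - q₁| + |y₂ - q₂| := abs_sub _ _
      _ ≤ ε / 2 + ε / 2 := add_le_add h1 h2
      _ = ε := by ring
  by_cases hcase : |w| < (2 : ℝ) ^ (M : ℕ)
  · rw [modLat_eq_self (M + 1) (by rw [hhalf]; exact hcase)]
    have h1 : (Z - w) ^ 2 ≤ ε ^ 2 := by
      rw [← sq_abs]
      exact pow_le_pow_left₀ (abs_nonneg _) hZw 2
    have h2 : ε ^ 2 ≤ ε := by nlinarith
    have h3 := indicator_nonneg_aux ((2 : ℝ) ^ M - 1) Z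
    linarith
  · push_neg at hcase
    have hZbig : (2 : ℝ) ^ M - 1 ≤ |Z| := by
      have h1 : |w| - |Z| ≤ |w - Z| := abs_sub_abs_le_abs_sub w Z
      have h2 : |w - Z| = |Z - w| := abs_sub_comm w Z
      linarith
    have hmem : Z ∈ {z : ℝ | (2 : ℝ) ^ M - 1 ≤ |z|} := hZbig
    rw [Set.indicator_of_mem hmem]
    set a := modLat (M + 1) w with hadef
    have ha : |a| ≤ (2 : ℝ) ^ (M : ℕ) := by
      have := abs_modLat_le (M + 1) w
      rw [hhalf] at this
      exact this
    have ha2 : |a| ≤ |Z| + 1 := by linarith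
    have habs : |Z - a| ≤ 2 * |Z| + 1 := by
      calc |Z - a| ≤ |Z| + |a| := abs_sub _ _
        _ ≤ 2 * |Z| + 1 := by linarith
    have hsq : (Z - a) ^ 2 ≤ (2 * |Z| + 1) ^ 2 := by
      rw [← sq_abs]
      exact pow_le_pow_left₀ (abs_nonneg _) habs 2
    have hZ2 : |Z| ^ 2 = Z ^ 2 := sq_abs Z
    nlinarith [abs_nonneg Z, sq_nonneg (|Z| - 1), hε.le]

/-- For every `d > 0` there exist `m` and `n` (not depending on `σ²`)
such that for every zero-mean jointly Gaussian pair `(x₁, x₂)` with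
`E[x₁²] = E[x₂²] = σ² > 1/2` and `E[x₁ x₂] = (1 − 1/(2σ²))σ²` (so `x₁ − x₂` is standard
Gaussian), the lattice scheme `x̂₃ = (u₁ − u₂) mod Λ_o`, with `u_j = Q_i(x_j) mod Λ_o`,
satisfies `E[(x₁ − x₂ − x̂₃)²] ≤ d`. -/
theorem lattice_scheme_distortion (d : ℝ) (hd : 0 < d) :
    ∃ n m : ℕ,
      ∀ (Ω : Type) (_ : MeasurableSpace Ω) (μ : Measure Ω) (_ : IsProbabilityMeasure μ)
        (s : ℝ), 1 / 2 < s →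
        ∀ x₁ x₂ : Ω → ℝ, Measurable x₁ → Measurable x₂ →
          IsJointlyGaussian μ ![x₁, x₂] →
          (∫ ω, x₁ ω ∂μ) = 0 → (∫ ω, x₂ ω ∂μ) = 0 →
          (∫ ω, (x₁ ω) ^ 2 ∂μ) = s → (∫ ω, (x₂ ω) ^ 2 ∂μ) = s →
          (∫ ω, x₁ ω * x₂ ω ∂μ) = (1 - 1 / (2 * s)) * s →
          ∫ ω, (x₁ ω - x₂ ω -
              modLat m (modLat m (Qi n (x₁ ω)) - modLat m (Qi n (x₂ ω)))) ^ 2 ∂μ ≤ d := by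

  obtain ⟨n, hn⟩ : ∃ n : ℕ, (2 : ℝ) / d < 2 ^ n :=
    pow_unbounded_of_one_lt _ one_lt_two
  obtain ⟨C, hCdef⟩ : ∃ C : ℝ, C = ∫ z, (8 * z ^ 4 + 8 * z ^ 2) ∂(gaussianReal 0 1) := ⟨_, rfl⟩
  have hC0 : 0 ≤ C := hCdef ▸ integral_nonneg (fun z => by positivity)
  obtain ⟨M, hM⟩ : ∃ M : ℕ, max 1 (2 * C / d) + 1 < 2 ^ M :=
    pow_unbounded_of_one_lt _ one_lt_two
  refine ⟨n, M + 1, ?_⟩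
  intro Ω mΩ μ hprob s hs x₁ x₂ hx₁ hx₂ hJG hm1 hm2 hs1 hs2 hcov
  have hmax1 := le_max_left (1 : ℝ) (2 * C / d)
  have hmax2 := le_max_right (1 : ℝ) (2 * C / d)
  have hT1 : (1 : ℝ) ≤ (2 : ℝ) ^ M - 1 := by linarith
  have hT2 : 2 * C / d ≤ (2 : ℝ) ^ M - 1 := by linarith
  have hT0 : (0 : ℝ) < (2 : ℝ) ^ M - 1 := by linarith
  -- marginal laws and integrability
  obtain ⟨a1, b1, h1⟩ := hJG ![1, 0]
  have e1 : (fun ω => ∑ i, (![(1 : ℝ), 0]) i * (![x₁, x₂]) i ω) = x₁ := by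
    funext ω
    simp [Fin.sum_univ_two]
  rw [e1] at h1
  obtain ⟨a2, b2, h2⟩ := hJG ![0, 1]
  have e2 : (fun ω => ∑ i, (![(0 : ℝ), 1]) i * (![x₁, x₂]) i ω) = x₂ := by
    funext ω
    simp [Fin.sum_univ_two]
  rw [e2] at h2
  obtain ⟨m0, v, hmap⟩ := hJG ![1, -1]
  have e3 : (fun ω => ∑ i, (![(1 : ℝ), -1]) i * (![x₁, x₂]) i ω) = fun ω => x₁ ω - x₂ ω := by
    funext ω
    simp [Fin.sum_univ_two]
    ring
  rw [e3] at hmap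
  have hZmeas : Measurable (fun ω => x₁ ω - x₂ ω) := hx₁.sub hx₂
  have hint1 : Integrable x₁ μ := by
    have hI : Integrable (fun x : ℝ => x) (Measure.map x₁ μ) := by
      rw [h1]; exact integrable_id_gauss a1 b1
    exact (integrable_map_measure measurable_id'.aestronglyMeasurable
      hx₁.aemeasurable).mp hI
  have hint2 : Integrable x₂ μ := by
    have hI : Integrable (fun x : ℝ => x) (Measure.map x₂ μ) := by
      rw [h2]; exact integrable_id_gauss a2 b2
    exact (integrable_map_measure measurable_id'.aestronglyMeasurable
      hx₂.aemeasurable).mp hI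
  have hsq1 : Integrable (fun ω => (x₁ ω) ^ 2) μ := by
    have hI : Integrable (fun x : ℝ => x ^ 2) (Measure.map x₁ μ) := by
      rw [h1]; exact integrable_sq_gauss a1 b1
    exact (integrable_map_measure (by fun_prop) hx₁.aemeasurable).mp hI
  have hsq2 : Integrable (fun ω => (x₂ ω) ^ 2) μ := by
    have hI : Integrable (fun x : ℝ => x ^ 2) (Measure.map x₂ μ) := by
      rw [h2]; exact integrable_sq_gauss a2 b2
    exact (integrable_map_measure (by fun_prop) hx₂.aemeasurable).mp hI
  have hprodInt : Integrable (fun ω => x₁ ω * x₂ ω) μ := by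
    have hg : Integrable (fun ω => ((x₁ ω) ^ 2 + (x₂ ω) ^ 2) / 2) μ :=
      (hsq1.add hsq2).div_const 2
    refine Integrable.mono' hg ((hx₁.mul hx₂).aestronglyMeasurable)
      (Filter.Eventually.of_forall fun ω => ?_)
    rw [Real.norm_eq_abs, abs_mul]
    nlinarith [two_mul_le_add_sq (|x₁ ω|) (|x₂ ω|), sq_abs (x₁ ω), sq_abs (x₂ ω),
      abs_nonneg (x₁ ω), abs_nonneg (x₂ ω)]
  -- identify the law of x₁ - x₂ as standard gaussian
  have hZmean : ∫ ω, (x₁ ω - x₂ ω) ∂μ = 0 := by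
    rw [integral_sub hint1 hint2, hm1, hm2, sub_zero]
  have hm0 : m0 = 0 := by
    have h : ∫ y, y ∂(gaussianReal m0 v) = ∫ ω, (x₁ ω - x₂ ω) ∂μ := by
      rw [← hmap]
      exact integral_map hZmeas.aemeasurable measurable_id'.aestronglyMeasurable
    rw [integral_id_gauss, hZmean] at h
    exact h
  have hsqsum : ∫ ω, (x₁ ω - x₂ ω) ^ 2 ∂μ = 1 := by
    have he : (fun ω => (x₁ ω - x₂ ω) ^ 2) =
        fun ω => ((x₁ ω) ^ 2 - 2 * (x₁ ω * x₂ ω)) + (x₂ ω) ^ 2 := by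
      funext ω; ring
    rw [he]
    have hA : Integrable (fun ω => (x₁ ω) ^ 2 - 2 * (x₁ ω * x₂ ω)) μ :=
      hsq1.sub (hprodInt.const_mul 2)
    rw [integral_add hA hsq2, integral_sub hsq1 (hprodInt.const_mul 2),
      integral_const_mul, hs1, hs2, hcov]
    have hsne : s ≠ 0 := by linarith
    field_simp
    ring
  have hv1 : v = 1 := by
    have h : ∫ y, y ^ 2 ∂(gaussianReal m0 v) = ∫ ω, (x₁ ω - x₂ ω) ^ 2 ∂μ := by
      rw [← hmap]
      exact integral_map hZmeas.aemeasurable (by fun_prop)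
    rw [integral_sq_gauss, hsqsum, hm0] at h
    have : (v : ℝ) = 1 := by simpa using h
    exact_mod_cast this
  rw [hm0, hv1] at hmap
  -- the tail function
  have hSmeas : MeasurableSet {z : ℝ | (2 : ℝ) ^ M - 1 ≤ |z|} :=
    measurableSet_le measurable_const measurable_abs
  have hGmeas : Measurable
      (Set.indicator {z : ℝ | (2 : ℝ) ^ M - 1 ≤ |z|} (fun z => 8 * z ^ 2 + 8)) :=
    Measurable.indicator (by fun_prop) hSmeas
  have hbase : Integrable (fun z : ℝ => 8 * z ^ 2 + 8) (gaussianReal 0 1) :=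
    ((integrable_poly01 2).const_mul 8).add (integrable_const 8)
  have hGint : Integrable
      (Set.indicator {z : ℝ | (2 : ℝ) ^ M - 1 ≤ |z|} (fun z => 8 * z ^ 2 + 8))
      (gaussianReal 0 1) := hbase.indicator hSmeas
  have hpoly_int : Integrable (fun z : ℝ => 8 * z ^ 4 + 8 * z ^ 2) (gaussianReal 0 1) :=
    ((integrable_poly01 4).const_mul 8).add ((integrable_poly01 2).const_mul 8)
  have hg_le : ∀ z : ℝ,
      Set.indicator {z : ℝ | (2 : ℝ) ^ M - 1 ≤ |z|} (fun z => 8 * z ^ 2 + 8) z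
        ≤ (8 * z ^ 4 + 8 * z ^ 2) / ((2 : ℝ) ^ M - 1) ^ 2 := by
    intro z
    by_cases hz : z ∈ {z : ℝ | (2 : ℝ) ^ M - 1 ≤ |z|}
    · rw [Set.indicator_of_mem hz]
      have hzT : (2 : ℝ) ^ M - 1 ≤ |z| := hz
      have hTz : ((2 : ℝ) ^ M - 1) ^ 2 ≤ z ^ 2 := by
        rw [← sq_abs z]
        exact pow_le_pow_left₀ hT0.le hzT 2
      rw [le_div_iff₀ (by positivity)]
      nlinarith [sq_nonneg z, sq_nonneg (z ^ 2)]
    · rw [Set.indicator_of_notMem hz]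
      positivity
  have hGtail : ∫ z, Set.indicator {z : ℝ | (2 : ℝ) ^ M - 1 ≤ |z|}
      (fun z => 8 * z ^ 2 + 8) z ∂(gaussianReal 0 1) ≤ C / ((2 : ℝ) ^ M - 1) ^ 2 := by
    have h := integral_mono hGint (hpoly_int.div_const (((2 : ℝ) ^ M - 1) ^ 2)) hg_le
    rw [integral_div] at h
    rw [hCdef]
    exact h
  -- the composed tail function is integrable
  have hGZ : Integrable (fun ω =>
      Set.indicator {z : ℝ | (2 : ℝ) ^ M - 1 ≤ |z|} (fun z => 8 * z ^ 2 + 8)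
        (x₁ ω - x₂ ω)) μ := by
    have hI : Integrable
        (Set.indicator {z : ℝ | (2 : ℝ) ^ M - 1 ≤ |z|} (fun z => 8 * z ^ 2 + 8))
        (Measure.map (fun ω => x₁ ω - x₂ ω) μ) := by
      rw [hmap]; exact hGint
    exact (integrable_map_measure hGmeas.aestronglyMeasurable hZmeas.aemeasurable).mp hI
  -- main chain
  have hεd : (2 : ℝ) ^ (-(n : ℤ)) ≤ d / 2 := by
    have h2n : (0 : ℝ) < 2 ^ n := by positivity
    rw [div_lt_iff₀ hd] at hn
    have key : (1 : ℝ) ≤ (d / 2) * 2 ^ n := by nlinarith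
    rw [zpow_neg, zpow_natCast]
    calc ((2 : ℝ) ^ n)⁻¹ = 1 * ((2 : ℝ) ^ n)⁻¹ := (one_mul _).symm
      _ ≤ ((d / 2) * 2 ^ n) * ((2 : ℝ) ^ n)⁻¹ :=
        mul_le_mul_of_nonneg_right key (by positivity)
      _ = d / 2 := by field_simp
  have hCd : C / ((2 : ℝ) ^ M - 1) ^ 2 ≤ d / 2 := by
    rw [div_le_iff₀ hd] at hT2
    have hkey : C ≤ d / 2 * ((2 : ℝ) ^ M - 1) ^ 2 := by
      nlinarith [mul_nonneg (mul_nonneg (sub_nonneg.mpr hT1) hT0.le) hd.le]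
    rw [div_le_iff₀ (by positivity)]
    linarith
  calc ∫ ω, (x₁ ω - x₂ ω -
        modLat (M + 1) (modLat (M + 1) (Qi n (x₁ ω)) - modLat (M + 1) (Qi n (x₂ ω)))) ^ 2 ∂μ
      ≤ ∫ ω, ((2 : ℝ) ^ (-(n : ℤ)) +
          Set.indicator {z : ℝ | (2 : ℝ) ^ M - 1 ≤ |z|} (fun z => 8 * z ^ 2 + 8)
            (x₁ ω - x₂ ω)) ∂μ := by
        refine integral_mono_of_nonneg (Filter.Eventually.of_forall fun ω => sq_nonneg _)
          ((integrable_const _).add hGZ)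
          (Filter.Eventually.of_forall fun ω => ?_)
        exact pointwise_bound n M (x₁ ω) (x₂ ω)
    _ = (2 : ℝ) ^ (-(n : ℤ)) + ∫ z, Set.indicator {z : ℝ | (2 : ℝ) ^ M - 1 ≤ |z|}
          (fun z => 8 * z ^ 2 + 8) z ∂(gaussianReal 0 1) := by
        rw [integral_add (integrable_const _) hGZ, integral_const]
        simp only [probReal_univ, measure_univ, ENNReal.toReal_one, one_smul]
        congr 1
        rw [← hmap]
        exact (integral_map hZmeas.aemeasurable hGmeas.aestronglyMeasurable).symm
    _ ≤ d / 2 + C / ((2 : ℝ) ^ M - 1) ^ 2 := add_le_add hεd hGtail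
    _ ≤ d / 2 + d / 2 := add_le_add_right hCd _
    _ = d := by ring
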